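/- Let G be a finite group and M ◁ G with |G:M| = p a prime. Then G⁻ ⊆ M if and only if every element of G \ M has p-power order. -/
import Mathlib


/-- A subgroup is maximal cyclic if it is cyclic and not properly contained
in any cyclic subgroup. -/
def IsMaximalCyclic {G : Type*} [Group G] (C : Subgroup G) : Prop :=
  IsCyclic C ∧ ∀ D : Subgroup G, IsCyclic D → C ≤ D → C = D

/-- η(G): the number of conjugacy classes of maximal cyclic subgroups of `G`. -/
noncomputable def eta (G : Type*) [Group G] : ℕ :=
  Nat.card (Quot (fun C D : {C : Subgroup G // IsMaximalCyclic C} =>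
    ∃ g : G, D.1 = C.1.map (MulAut.conj g).toMonoidHom))

/-- The set of elements generating a non-maximal cyclic subgroup. -/
def Gminus (G : Type*) [Group G] : Set G :=
  {g : G | ¬ IsMaximalCyclic (Subgroup.zpowers g)}

/-- `C` is a maximal cyclic subgroup of `N` (all inside an ambient group). -/
def IsMaximalCyclicIn {G : Type*} [Group G] (N C : Subgroup G) : Prop :=
  C ≤ N ∧ IsCyclic C ∧ ∀ D : Subgroup G, D ≤ N → IsCyclic D → C ≤ D → C = D

lemma isCyclic_zpowers {G : Type*} [Group G] (g : G) :
    IsCyclic (Subgroup.zpowers g) := by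
  refine ⟨⟨⟨g, Subgroup.mem_zpowers g⟩, ?_⟩⟩
  rintro ⟨x, hx⟩
  obtain ⟨k, hk⟩ := hx
  exact ⟨k, Subtype.ext (by simpa using hk)⟩

theorem stmt_14 {G : Type*} [Group G] [Finite G] (M : Subgroup G) [M.Normal]
    {p : ℕ} (hp : p.Prime) (hidx : M.index = p) :
    Gminus G ⊆ (M : Set G) ↔ ∀ g : G, g ∉ M → ∃ n : ℕ, orderOf g = p ^ n := by
  have hq : Nat.card (G ⧸ M) = p := by rw [← hidx]; exact M.index_eq_card.symm
  have horderπ : ∀ g : G, g ∉ M → orderOf ((g : G ⧸ M)) = p := by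
    intro g hg
    have h1 : orderOf ((g : G ⧸ M)) ∣ p := hq ▸ orderOf_dvd_natCard _
    rcases (hp.eq_one_or_self_of_dvd _ h1) with h | h
    · exact absurd ((QuotientGroup.eq_one_iff g).mp (orderOf_eq_one_iff.mp h)) hg
    · exact h
  constructor
  · intro hG g hg
    set n := orderOf g with hn
    have hn0 : n ≠ 0 := (orderOf_pos g).ne'
    set m := n / p ^ n.factorization p with hm
    have hmn : m ∣ n := Nat.ordCompl_dvd n p
    have hcop : Nat.Coprime p m := Nat.coprime_ordCompl hp hn0
    have hh : (g ^ m) ∉ M := by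
      intro hmem
      have h1 : ((g : G ⧸ M)) ^ m = 1 := (QuotientGroup.eq_one_iff _).mpr hmem
      have h2 := orderOf_dvd_of_pow_eq_one h1
      rw [horderπ g hg] at h2
      exact (hp.coprime_iff_not_dvd.mp hcop) h2
    have hmax : IsMaximalCyclic (Subgroup.zpowers (g ^ m)) := by
      by_contra hc
      exact hh (hG hc)
    have hle : Subgroup.zpowers (g ^ m) ≤ Subgroup.zpowers g :=
      Subgroup.zpowers_le.mpr (Subgroup.pow_mem _ (Subgroup.mem_zpowers g) m)
    have heq := hmax.2 (Subgroup.zpowers g) (isCyclic_zpowers g) hle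
    have hcard : orderOf (g ^ m) = orderOf g := by
      rw [← Nat.card_zpowers, ← Nat.card_zpowers, heq]
    have horder : orderOf (g ^ m) = p ^ n.factorization p := by
      rw [orderOf_pow, ← hn, Nat.gcd_eq_right hmn]
      exact Nat.div_eq_of_eq_mul_left (Nat.ordCompl_pos p hn0)
        (Nat.ordProj_mul_ordCompl_eq_self n p).symm
    exact ⟨n.factorization p, hn.trans ((hcard.symm).trans horder)⟩
  · intro hyp g hgmin
    by_contra hg0
    have hg : g ∉ M := hg0
    clear hg0
    apply hgmin
    refine ⟨isCyclic_zpowers g, ?_⟩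
    intro D hD hle
    obtain ⟨⟨d, hdD⟩, hgen⟩ := hD.exists_generator
    have hDd : D = Subgroup.zpowers d := by
      ext x
      constructor
      · intro hx
        obtain ⟨k, hk⟩ := hgen ⟨x, hx⟩
        exact ⟨k, by simpa using congrArg Subtype.val hk⟩
      · rintro ⟨k, rfl⟩
        exact Subgroup.zpow_mem D hdD k
    obtain ⟨k, hk0⟩ : g ∈ Subgroup.zpowers d := hDd ▸ hle (Subgroup.mem_zpowers g)
    have hk : d ^ k = g := hk0
    clear hk0
    have hd : d ∉ M := by
      intro hdM
      exact hg (hk ▸ Subgroup.zpow_mem M hdM k)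
    obtain ⟨a, ha⟩ := hyp g hg
    obtain ⟨b, hb⟩ := hyp d hd
    -- p does not divide k
    have hpk : ¬ ((p : ℤ) ∣ k) := by
      rintro ⟨c, hkc⟩
      subst hkc
      apply hg
      rw [← QuotientGroup.eq_one_iff]
      have h1 : ((d : G ⧸ M)) ^ (p : ℕ) = 1 := by
        rw [← orderOf_dvd_iff_pow_eq_one, horderπ d hd]
      calc ((g : G ⧸ M)) = ((d : G ⧸ M)) ^ ((p : ℤ) * c) := by
            rw [← hk]; push_cast [QuotientGroup.mk_zpow]; ring_nf
        _ = (((d : G ⧸ M)) ^ (p : ℕ)) ^ c := by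
            rw [← zpow_natCast, ← zpow_mul]
        _ = 1 := by rw [h1, one_zpow]
    -- orderOf g divides orderOf d
    have hdvd : orderOf g ∣ orderOf d := by
      apply orderOf_dvd_of_pow_eq_one
      rw [← hk, ← zpow_natCast, ← zpow_mul, mul_comm, zpow_mul, zpow_natCast,
        pow_orderOf_eq_one, one_zpow]
    have hab : a ≤ b := by
      rw [ha, hb] at hdvd
      exact (Nat.pow_dvd_pow_iff_le_right hp.one_lt).mp hdvd
    have hba : b ≤ a := by
      by_contra hcon
      push_neg at hcon
      apply hpk
      have h1 : g ^ (p ^ a) = 1 := ha ▸ pow_orderOf_eq_one g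
      have h2 : d ^ (k * (p : ℤ) ^ a) = 1 := by
        rw [zpow_mul, hk]; exact_mod_cast (by exact_mod_cast h1 : g ^ ((p : ℤ) ^ a) = 1)
      have h3 : ((orderOf d : ℤ)) ∣ k * (p : ℤ) ^ a := orderOf_dvd_iff_zpow_eq_one.mpr h2
      rw [hb] at h3
      push_cast at h3
      have h4 : (p : ℤ) ^ (a + 1) ∣ (p : ℤ) ^ b := pow_dvd_pow _ hcon
      have h5 : (p : ℤ) ^ a * (p : ℤ) ∣ (p : ℤ) ^ a * k := by
        rw [← pow_succ]
        calc (p : ℤ) ^ (a + 1) ∣ (p : ℤ) ^ b := h4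
          _ ∣ k * (p : ℤ) ^ a := h3
          _ = (p : ℤ) ^ a * k := mul_comm _ _
      exact (mul_dvd_mul_iff_left (pow_ne_zero a (by exact_mod_cast hp.ne_zero))).mp h5
    have hord : orderOf g = orderOf d := by rw [ha, hb, le_antisymm hab hba]
    rw [hDd]
    apply Subgroup.eq_of_le_of_card_ge (hDd ▸ hle)
    rw [Nat.card_zpowers, Nat.card_zpowers, hord]
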